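/- Let (𝒰, μ) be a probability space, γ ≥ 0, and let f : ℝ × 𝒰 → ℝ be everywhere positive, with u ↦ f(a, u) measurable and μ-integrable for each a ∈ ℝ. Define F(a) := ∫ f(a, u′) dμ(u′), and assume F(a) > 0 for all a. Suppose that for all a₁, a₂ ∈ ℝ and all u, u′ ∈ 𝒰, exp(−γ·|a₁ − a₂|) ≤ (f(a₂, u)·f(a₁, u′)) / (f(a₁, u)·f(a₂, u′)) ≤ exp(γ·|a₁ − a₂|). Then for all a₁, a₂ ∈ ℝ and all u ∈ 𝒰, exp(−γ·|a₁ − a₂|) ≤ (f(a₂, u)·F(a₁)) / (f(a₁, u)·F(a₂)) ≤ exp(γ·|a₁ − a₂|). -/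
import Mathlib


open MeasureTheory

/-- second implication of Lemma 9: if the Rosenbaum-type sensitivity model
holds at parameter `γ` — the odds ratio of the latent density `f` at any two dose levels
and any two confounder values is bounded by `exp (±γ|a₁ - a₂|)` — then the marginal
sensitivity model holds at the same parameter `γ` with respect to the marginalized
density `F a = ∫ f (a, u') dμ(u')`. -/
theorem rosenbaum_gamma_implies_marginal_gamma
    {𝒰 : Type*} [MeasurableSpace 𝒰] (μ : Measure 𝒰) [IsProbabilityMeasure μ]
    (γ : ℝ) (hγ : 0 ≤ γ)
    (f : ℝ → 𝒰 → ℝ)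
    (hf : ∀ a u, 0 < f a u)
    (hmeas : ∀ a, Measurable (f a))
    (hint : ∀ a, Integrable (f a) μ)
    (F : ℝ → ℝ) (hF : ∀ a, F a = ∫ u', f a u' ∂μ)
    (hFpos : ∀ a, 0 < F a)
    (hmodel : ∀ (a₁ a₂ : ℝ) (u u' : 𝒰),
      Real.exp (-(γ * |a₁ - a₂|)) ≤ f a₂ u * f a₁ u' / (f a₁ u * f a₂ u') ∧
      f a₂ u * f a₁ u' / (f a₁ u * f a₂ u') ≤ Real.exp (γ * |a₁ - a₂|)) :
    ∀ (a₁ a₂ : ℝ) (u : 𝒰),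
      Real.exp (-(γ * |a₁ - a₂|)) ≤ f a₂ u * F a₁ / (f a₁ u * F a₂) ∧
      f a₂ u * F a₁ / (f a₁ u * F a₂) ≤ Real.exp (γ * |a₁ - a₂|) := by
  intro a₁ a₂ u
  set Ep := Real.exp (γ * |a₁ - a₂|) with hEp
  set Em := Real.exp (-(γ * |a₁ - a₂|)) with hEm
  have hden : 0 < f a₁ u * F a₂ := mul_pos (hf a₁ u) (hFpos a₂)
  -- pointwise bounds multiplied out
  have hup : ∀ u', f a₂ u * f a₁ u' ≤ Ep * (f a₁ u * f a₂ u') := by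
    intro u'
    have h := (hmodel a₁ a₂ u u').2
    have hpos : 0 < f a₁ u * f a₂ u' := mul_pos (hf a₁ u) (hf a₂ u')
    rwa [div_le_iff₀ hpos] at h
  have hlo : ∀ u', Em * (f a₁ u * f a₂ u') ≤ f a₂ u * f a₁ u' := by
    intro u'
    have h := (hmodel a₁ a₂ u u').1
    have hpos : 0 < f a₁ u * f a₂ u' := mul_pos (hf a₁ u) (hf a₂ u')
    rwa [le_div_iff₀ hpos] at h
  have hint1 : Integrable (fun u' => f a₂ u * f a₁ u') μ := (hint a₁).const_mul _
  have hint2 : Integrable (fun u' => Ep * (f a₁ u * f a₂ u')) μ :=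
    ((hint a₂).const_mul _).const_mul _
  have hint3 : Integrable (fun u' => Em * (f a₁ u * f a₂ u')) μ :=
    ((hint a₂).const_mul _).const_mul _
  have hI1 : (∫ u', f a₂ u * f a₁ u' ∂μ) = f a₂ u * F a₁ := by
    rw [integral_const_mul, hF]
  have hI2 : (∫ u', Ep * (f a₁ u * f a₂ u') ∂μ) = Ep * (f a₁ u * F a₂) := by
    rw [integral_const_mul, integral_const_mul, hF]
  have hI3 : (∫ u', Em * (f a₁ u * f a₂ u') ∂μ) = Em * (f a₁ u * F a₂) := by
    rw [integral_const_mul, integral_const_mul, hF]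
  have hU : f a₂ u * F a₁ ≤ Ep * (f a₁ u * F a₂) := by
    rw [← hI1, ← hI2]; exact integral_mono hint1 hint2 hup
  have hL : Em * (f a₁ u * F a₂) ≤ f a₂ u * F a₁ := by
    rw [← hI1, ← hI3]; exact integral_mono hint3 hint1 hlo
  constructor
  · rw [le_div_iff₀ hden]; exact hL
  · rw [div_le_iff₀ hden]; exact hU
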